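/- arXiv:1501.02090 — 4 statements merged into one kernel-verified Lean document; each statement's English description precedes it below -/
import Mathlib

section
/- Let x_1,…,x_N ∈ S², w_1,…,w_N > 0 and Y_1,…,Y_m : S² → ℝ form a discretely orthonormal system, let α > 0, β_1,…,β_m > 0, and let y^ε_1,…,y^ε_N ∈ ℝ be given data values. Define F : ℝ^m → ℝ by F(γ) = Σ_{i=1}^N w_i (Σ_{a=1}^m γ_a Y_a(x_i) − y^ε_i)² + α Σ_{i=1}^N w_i (Σ_{a=1}^m β_a γ_a Y_a(x_i))². Then F has a unique global minimizer γ* on ℝ^m, whose components are γ*_a = (1+αβ_a²)^{-1} Σ_{i=1}^N w_i Y_a(x_i) y^ε_i; that is, F(γ*) ≤ F(γ) for all γ ∈ ℝ^m, with equality only when γ = γ*. -/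
open scoped BigOperators

/-- The unit sphere in ℝ³. -/
abbrev S2 : Type := Metric.sphere (0 : EuclideanSpace ℝ (Fin 3)) 1

/-- Unique global minimizer of the regularized weighted least-squares functional,
with explicitly given components. -/
theorem regularized_least_squares_unique_minimizer
    (N m : ℕ) (x : Fin N → S2) (w : Fin N → ℝ) (hw : ∀ i, 0 < w i)
    (Y : Fin m → S2 → ℝ)
    (horth : ∀ a b : Fin m,
      ∑ i, w i * Y a (x i) * Y b (x i) = if a = b then 1 else 0)
    (α : ℝ) (hα : 0 < α) (β : Fin m → ℝ) (hβ : ∀ a, 0 < β a)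
    (yε : Fin N → ℝ)
    (F : (Fin m → ℝ) → ℝ)
    (hF : ∀ γ : Fin m → ℝ,
      F γ = ∑ i, w i * (∑ a, γ a * Y a (x i) - yε i) ^ 2
        + α * ∑ i, w i * (∑ a, β a * γ a * Y a (x i)) ^ 2)
    (γstar : Fin m → ℝ)
    (hγstar : ∀ a, γstar a = (1 + α * β a ^ 2)⁻¹ * ∑ i, w i * Y a (x i) * yε i) :
    ∀ γ : Fin m → ℝ, F γstar ≤ F γ ∧ (F γ = F γstar → γ = γstar) := by
  set c : Fin m → ℝ := fun a => ∑ i, w i * Y a (x i) * yε i with hc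
  -- quadratic term identity
  have key : ∀ u : Fin m → ℝ,
      (∑ i, w i * (∑ a, u a * Y a (x i)) ^ 2) = ∑ a, (u a) ^ 2 := by
    intro u
    have h1 : ∀ i, w i * (∑ a, u a * Y a (x i)) ^ 2
        = ∑ a, ∑ b, u a * u b * (w i * Y a (x i) * Y b (x i)) := by
      intro i
      rw [sq, Finset.sum_mul_sum, Finset.mul_sum]
      refine Finset.sum_congr rfl fun a _ => ?_
      rw [Finset.mul_sum]
      exact Finset.sum_congr rfl fun b _ => by ring
    calc (∑ i, w i * (∑ a, u a * Y a (x i)) ^ 2)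
        = ∑ i, ∑ a, ∑ b, u a * u b * (w i * Y a (x i) * Y b (x i)) := by
          exact Finset.sum_congr rfl fun i _ => h1 i
      _ = ∑ a, ∑ b, ∑ i, u a * u b * (w i * Y a (x i) * Y b (x i)) := by
          rw [Finset.sum_comm]
          exact Finset.sum_congr rfl fun a _ => Finset.sum_comm
      _ = ∑ a, ∑ b, u a * u b * (if a = b then 1 else 0) := by
          refine Finset.sum_congr rfl fun a _ => Finset.sum_congr rfl fun b _ => ?_
          rw [← Finset.mul_sum, horth a b]
      _ = ∑ a, (u a) ^ 2 := by
          refine Finset.sum_congr rfl fun a _ => ?_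
          simp [mul_ite, Finset.sum_ite_eq, sq]
  -- cross term identity
  have cross : ∀ u : Fin m → ℝ,
      (∑ i, w i * (∑ a, u a * Y a (x i)) * yε i) = ∑ a, u a * c a := by
    intro u
    calc (∑ i, w i * (∑ a, u a * Y a (x i)) * yε i)
        = ∑ i, ∑ a, u a * (w i * Y a (x i) * yε i) := by
          refine Finset.sum_congr rfl fun i _ => ?_
          rw [Finset.mul_sum, Finset.sum_mul]
          exact Finset.sum_congr rfl fun a _ => by ring
      _ = ∑ a, ∑ i, u a * (w i * Y a (x i) * yε i) := Finset.sum_comm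
      _ = ∑ a, u a * c a := by
          refine Finset.sum_congr rfl fun a _ => ?_
          rw [← Finset.mul_sum]
  -- expansion of F
  have expand : ∀ γ : Fin m → ℝ,
      F γ = (∑ a, (γ a) ^ 2) - 2 * (∑ a, γ a * c a) + (∑ i, w i * (yε i) ^ 2)
        + α * ∑ a, (β a * γ a) ^ 2 := by
    intro γ
    have e1 : ∀ i, w i * (∑ a, γ a * Y a (x i) - yε i) ^ 2
        = w i * (∑ a, γ a * Y a (x i)) ^ 2
          - 2 * (w i * (∑ a, γ a * Y a (x i)) * yε i) + w i * (yε i) ^ 2 := by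
      intro i; ring
    rw [hF]
    simp_rw [e1]
    rw [Finset.sum_add_distrib, Finset.sum_sub_distrib, ← Finset.mul_sum]
    rw [key γ, key (fun a => β a * γ a), cross γ]
  have hpos : ∀ a, (0:ℝ) < 1 + α * β a ^ 2 := fun a =>
    by positivity
  have hcst : ∀ a, c a = (1 + α * β a ^ 2) * γstar a := by
    intro a
    rw [hγstar a]
    field_simp
    rfl
  -- main identity
  have main : ∀ γ : Fin m → ℝ,
      F γ - F γstar = ∑ a, (1 + α * β a ^ 2) * (γ a - γstar a) ^ 2 := by
    intro γ
    have hsplit : (∑ a, (1 + α * β a ^ 2) * (γ a - γstar a) ^ 2)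
        = ((∑ a, (γ a) ^ 2) - (∑ a, (γstar a) ^ 2))
          - 2 * ((∑ a, γ a * c a) - (∑ a, γstar a * c a))
          + α * ((∑ a, (β a * γ a) ^ 2) - (∑ a, (β a * γstar a) ^ 2)) := by
      simp only [Finset.mul_sum, ← Finset.sum_sub_distrib, ← Finset.sum_add_distrib]
      exact Finset.sum_congr rfl fun a _ => by rw [hcst a]; ring
    rw [expand γ, expand γstar, hsplit]
    ring
  intro γ
  have hnn : ∀ a ∈ Finset.univ, (0:ℝ) ≤ (1 + α * β a ^ 2) * (γ a - γstar a) ^ 2 :=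
    fun a _ => mul_nonneg (hpos a).le (sq_nonneg _)
  have hsum : 0 ≤ F γ - F γstar := (main γ) ▸ Finset.sum_nonneg hnn
  refine ⟨by linarith, fun heq => ?_⟩
  have hz : (∑ a, (1 + α * β a ^ 2) * (γ a - γstar a) ^ 2) = 0 := by
    rw [← main γ, heq]; ring
  have := (Finset.sum_eq_zero_iff_of_nonneg hnn).mp hz
  funext a
  have ha := this a (Finset.mem_univ a)
  have := mul_eq_zero.mp ha
  rcases this with h | h
  · exact absurd h (ne_of_gt (hpos a))
  · have := pow_eq_zero_iff (n := 2) (by norm_num) |>.mp h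
    linarith [sub_eq_zero.mp this]
end

section
/- Let M ∈ ℕ, α ≥ 0, β_0,…,β_M > 0, let x_1,…,x_N ∈ S² be pairwise distinct points and w_1,…,w_N > 0, and define the operator T_{α,M}^β on C(S²) by (T_{α,M}^β f)(x) = Σ_{k=0}^M (2k+1)/(4π(1+αβ_k²)) Σ_{i=1}^N w_i P_k(x·x_i) f(x_i). Then T_{α,M}^β is a bounded linear operator from C(S²) to C(S²) whose operator norm equals max_{x∈S²} Σ_{i=1}^N w_i |Σ_{k=0}^M (2k+1)/(4π(1+αβ_k²)) P_k(x·x_i)|, and this quantity is bounded above by max_{x∈S²} Σ_{i=1}^N w_i Σ_{k=0}^M (2k+1)/(4π(1+αβ_k²)) |P_k(x·x_i)|. -/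
open scoped BigOperators
open Polynomial

noncomputable section

/-- The degree-`k` Legendre polynomial, via Rodrigues' formula
`P_k(t) = (1/(2^k k!)) (d/dt)^k (t² − 1)^k`, normalized so that `P_k(1) = 1`. -/
def legendreP (k : ℕ) : Polynomial ℝ :=
  ((1 : ℝ) / (2 ^ k * k.factorial)) •
    ((fun p : Polynomial ℝ => Polynomial.derivative p)^[k] ((X ^ 2 - 1) ^ k))

/-- Theorem 4.1 of the paper: the norm of the regularized least-squares operator
`T_{α,M}^β` on `C(S²)` equals `max_x Σ_i w_i |Σ_k (2k+1)/(4π(1+αβ_k²)) P_k(x·x_i)|`,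
which is bounded by `max_x Σ_i w_i Σ_k (2k+1)/(4π(1+αβ_k²)) |P_k(x·x_i)|`. -/
theorem regularized_operator_norm
    (M N : ℕ) (α : ℝ) (hα : 0 ≤ α)
    (β : ℕ → ℝ) (hβ : ∀ k ≤ M, 0 < β k)
    (x : Fin N → S2) (hx : Function.Injective x)
    (w : Fin N → ℝ) (hw : ∀ i, 0 < w i) :
    ∃ T : C(S2, ℝ) →L[ℝ] C(S2, ℝ),
      (∀ (f : C(S2, ℝ)) (z : S2),
        T f z = ∑ k ∈ Finset.range (M + 1),
          (2 * (k : ℝ) + 1) / (4 * Real.pi * (1 + α * β k ^ 2)) *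
            ∑ i, w i * (legendreP k).eval
              (inner ℝ (z : EuclideanSpace ℝ (Fin 3)) (x i : EuclideanSpace ℝ (Fin 3)) : ℝ)
              * f (x i)) ∧
      ‖T‖ = (⨆ z : S2, ∑ i, w i *
          |∑ k ∈ Finset.range (M + 1),
            (2 * (k : ℝ) + 1) / (4 * Real.pi * (1 + α * β k ^ 2)) *
              (legendreP k).eval
                (inner ℝ (z : EuclideanSpace ℝ (Fin 3)) (x i : EuclideanSpace ℝ (Fin 3)) : ℝ)|) ∧
      (⨆ z : S2, ∑ i, w i *
          |∑ k ∈ Finset.range (M + 1),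
            (2 * (k : ℝ) + 1) / (4 * Real.pi * (1 + α * β k ^ 2)) *
              (legendreP k).eval
                (inner ℝ (z : EuclideanSpace ℝ (Fin 3)) (x i : EuclideanSpace ℝ (Fin 3)) : ℝ)|)
        ≤ ⨆ z : S2, ∑ i, w i *
            ∑ k ∈ Finset.range (M + 1),
              (2 * (k : ℝ) + 1) / (4 * Real.pi * (1 + α * β k ^ 2)) *
                |(legendreP k).eval
                  (inner ℝ (z : EuclideanSpace ℝ (Fin 3)) (x i : EuclideanSpace ℝ (Fin 3)) : ℝ)| := by
  classical
  haveI : Nonempty S2 := NormedSpace.sphere_nonempty.mpr zero_le_one |>.to_subtype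
  set d : ℕ → ℝ := fun k => (2 * (k : ℝ) + 1) / (4 * Real.pi * (1 + α * β k ^ 2)) with hd
  have hd0 : ∀ k ∈ Finset.range (M + 1), 0 ≤ d k := by
    intro k hk
    have hβk := hβ k (Nat.lt_succ_iff.mp (Finset.mem_range.mp hk))
    have hπ := Real.pi_pos
    have h1 : (0:ℝ) < 1 + α * β k ^ 2 := by positivity
    have h2 : (0:ℝ) ≤ 2 * (k : ℝ) + 1 := by positivity
    positivity
  set c : S2 → Fin N → ℝ := fun z i => ∑ k ∈ Finset.range (M + 1),
      d k * (legendreP k).eval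
        (inner ℝ (z : EuclideanSpace ℝ (Fin 3)) (x i : EuclideanSpace ℝ (Fin 3)) : ℝ) with hcdef
  have hc : ∀ i, Continuous fun z => c z i := by
    intro i
    exact continuous_finset_sum _ fun k _ => continuous_const.mul
      ((legendreP k).continuous.comp (continuous_subtype_val.inner continuous_const))
  set g : S2 → ℝ := fun z => ∑ i, w i * |c z i| with hgdef
  have hgcont : Continuous g :=
    continuous_finset_sum _ fun i _ => continuous_const.mul (hc i).abs
  obtain ⟨z₀, -, hz₀⟩ := isCompact_univ.exists_isMaxOn Set.univ_nonempty hgcont.continuousOn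
  have hz₀' : ∀ z : S2, g z ≤ g z₀ := fun z => hz₀ (Set.mem_univ z)
  have hbdd : BddAbove (Set.range g) := ⟨g z₀, by rintro _ ⟨z, rfl⟩; exact hz₀' z⟩
  have hSeq : (⨆ z, g z) = g z₀ := le_antisymm (ciSup_le hz₀') (le_ciSup hbdd z₀)
  have hg0 : 0 ≤ g z₀ :=
    Finset.sum_nonneg fun i _ => mul_nonneg (hw i).le (abs_nonneg _)
  -- the operator
  have hTcont : ∀ f : C(S2, ℝ), Continuous fun z => ∑ i, w i * c z i * f (x i) := fun f =>
    continuous_finset_sum _ fun i _ => (continuous_const.mul (hc i)).mul continuous_const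
  set L : C(S2, ℝ) →ₗ[ℝ] C(S2, ℝ) :=
    { toFun := fun f => ⟨fun z => ∑ i, w i * c z i * f (x i), hTcont f⟩
      map_add' := by
        intro f₁ f₂; ext z
        simp [mul_add, Finset.sum_add_distrib]
      map_smul' := by
        intro r f; ext z
        simp [Finset.mul_sum]; ring_nf
        exact Finset.sum_congr rfl fun i _ => by ring } with hLdef
  have hbound : ∀ (f : C(S2, ℝ)) (z : S2), |∑ i, w i * c z i * f (x i)| ≤ g z₀ * ‖f‖ := by
    intro f z
    calc |∑ i, w i * c z i * f (x i)| ≤ ∑ i, |w i * c z i * f (x i)| :=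
          Finset.abs_sum_le_sum_abs _ _
      _ = ∑ i, w i * |c z i| * |f (x i)| := by
          refine Finset.sum_congr rfl fun i _ => ?_
          rw [abs_mul, abs_mul, abs_of_pos (hw i)]
      _ ≤ ∑ i, w i * |c z i| * ‖f‖ := by
          refine Finset.sum_le_sum fun i _ => ?_
          exact mul_le_mul_of_nonneg_left (f.norm_coe_le_norm (x i))
            (mul_nonneg (hw i).le (abs_nonneg _))
      _ = g z * ‖f‖ := by rw [hgdef]; simp [Finset.sum_mul]
      _ ≤ g z₀ * ‖f‖ := mul_le_mul_of_nonneg_right (hz₀' z) (norm_nonneg f)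
  have hLnorm : ∀ f : C(S2, ℝ), ‖L f‖ ≤ g z₀ * ‖f‖ := by
    intro f
    refine ContinuousMap.norm_le _ (mul_nonneg hg0 (norm_nonneg f)) |>.mpr fun z => ?_
    rw [Real.norm_eq_abs]; exact hbound f z
  set T : C(S2, ℝ) →L[ℝ] C(S2, ℝ) := L.mkContinuous (g z₀) hLnorm with hTdef
  refine ⟨T, ?_, ?_, ?_⟩
  · -- formula
    intro f z
    show (∑ i, w i * c z i * f (x i)) = _
    rw [hcdef]
    simp only [Finset.sum_mul, Finset.mul_sum]
    rw [Finset.sum_comm]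
    exact Finset.sum_congr rfl fun k _ => Finset.sum_congr rfl fun i _ => by ring
  · -- norm
    rw [show (⨆ z : S2, ∑ i, w i *
        |∑ k ∈ Finset.range (M + 1),
          (2 * (k : ℝ) + 1) / (4 * Real.pi * (1 + α * β k ^ 2)) *
            (legendreP k).eval
              (inner ℝ (z : EuclideanSpace ℝ (Fin 3)) (x i : EuclideanSpace ℝ (Fin 3)) : ℝ)|)
        = ⨆ z, g z from rfl, hSeq]
    refine le_antisymm (T.opNorm_le_bound hg0 hLnorm) ?_
    -- construct the sign function and extend
    set s : Fin N → ℝ := fun i => if c z₀ i < 0 then -1 else 1 with hsdef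
    have hs1 : ∀ i, |s i| = 1 := by
      intro i; rw [hsdef]; dsimp only; split <;> simp
    have hsc : ∀ i, c z₀ i * s i = |c z₀ i| := by
      intro i; rw [hsdef]; dsimp only; split
      · rw [abs_of_neg ‹_›]; ring
      · rw [abs_of_nonneg (not_lt.mp ‹_›)]; ring
    set F : Set S2 := Set.range x with hFdef
    have hFfin : F.Finite := Set.finite_range x
    haveI : Finite F := hFfin.to_subtype
    haveI : DiscreteTopology F := inferInstance
    set h0 : BoundedContinuousFunction F ℝ :=
      BoundedContinuousFunction.mkOfCompact
        ⟨fun p => s p.2.choose, continuous_of_discreteTopology⟩ with h0def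
    have h0val : ∀ i : Fin N, h0 ⟨x i, ⟨i, rfl⟩⟩ = s i := by
      intro i
      have hspec : x (⟨x i, ⟨i, rfl⟩⟩ : F).2.choose = x i :=
        (⟨x i, ⟨i, rfl⟩⟩ : F).2.choose_spec
      show s _ = s i
      rw [hx hspec]
    have h0norm : ‖h0‖ ≤ 1 := by
      refine BoundedContinuousFunction.norm_le zero_le_one |>.mpr fun p => ?_
      show ‖s p.2.choose‖ ≤ 1
      rw [Real.norm_eq_abs, hs1]
    obtain ⟨fb, hfbnorm, hfbres⟩ :=
      BoundedContinuousFunction.exists_norm_eq_restrict_eq_of_closed h0 hFfin.isClosed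
    set f : C(S2, ℝ) := fb.toContinuousMap with hfdef
    have hfval : ∀ i, f (x i) = s i := by
      intro i
      have := congrArg (fun u => u ⟨x i, ⟨i, rfl⟩⟩) hfbres
      simp [h0val i] at this
      exact this
    have hfnorm : ‖f‖ ≤ 1 := by
      refine ContinuousMap.norm_le _ zero_le_one |>.mpr fun z => ?_
      calc ‖f z‖ = ‖fb z‖ := rfl
        _ ≤ ‖fb‖ := fb.norm_coe_le_norm z
        _ ≤ 1 := by rw [hfbnorm]; exact h0norm
    have hTfz₀ : T f z₀ = g z₀ := by
      show (∑ i, w i * c z₀ i * f (x i)) = g z₀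
      rw [hgdef]
      refine Finset.sum_congr rfl fun i _ => ?_
      rw [hfval i, mul_assoc, hsc i]
    calc g z₀ = |T f z₀| := by rw [hTfz₀, abs_of_nonneg hg0]
      _ ≤ ‖T f‖ := (T f).norm_coe_le_norm z₀
      _ ≤ ‖T‖ * ‖f‖ := T.le_opNorm f
      _ ≤ ‖T‖ * 1 := mul_le_mul_of_nonneg_left hfnorm (norm_nonneg T)
      _ = ‖T‖ := mul_one _
  · -- comparison of sups
    set g2 : S2 → ℝ := fun z => ∑ i, w i * ∑ k ∈ Finset.range (M + 1),
        d k * |(legendreP k).eval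
          (inner ℝ (z : EuclideanSpace ℝ (Fin 3)) (x i : EuclideanSpace ℝ (Fin 3)) : ℝ)| with hg2def
    have hg2cont : Continuous g2 :=
      continuous_finset_sum _ fun i _ => continuous_const.mul
        (continuous_finset_sum _ fun k _ => continuous_const.mul
          (((legendreP k).continuous.comp (continuous_subtype_val.inner continuous_const)).abs))
    obtain ⟨z₁, -, hz₁⟩ := isCompact_univ.exists_isMaxOn Set.univ_nonempty hg2cont.continuousOn
    have hbdd2 : BddAbove (Set.range g2) := ⟨g2 z₁, by rintro _ ⟨z, rfl⟩; exact hz₁ (Set.mem_univ z)⟩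
    refine ciSup_le fun z => le_ciSup_of_le hbdd2 z ?_
    refine Finset.sum_le_sum fun i _ => ?_
    refine mul_le_mul_of_nonneg_left ?_ (hw i).le
    calc |∑ k ∈ Finset.range (M + 1), d k * (legendreP k).eval
            (inner ℝ (z : EuclideanSpace ℝ (Fin 3)) (x i : EuclideanSpace ℝ (Fin 3)) : ℝ)|
        ≤ ∑ k ∈ Finset.range (M + 1), |d k * (legendreP k).eval
            (inner ℝ (z : EuclideanSpace ℝ (Fin 3)) (x i : EuclideanSpace ℝ (Fin 3)) : ℝ)| :=
          Finset.abs_sum_le_sum_abs _ _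
      _ = ∑ k ∈ Finset.range (M + 1), d k * |(legendreP k).eval
            (inner ℝ (z : EuclideanSpace ℝ (Fin 3)) (x i : EuclideanSpace ℝ (Fin 3)) : ℝ)| := by
          refine Finset.sum_congr rfl fun k hk => ?_
          rw [abs_mul, abs_of_nonneg (hd0 k hk)]
end
end

section
/- Let M ≥ 1 and, for 0 ≤ k ≤ M and 1 ≤ j ≤ 2k+1, let Y_{k,j} : S² → ℝ be continuous functions that are orthonormal in L²(S²) and satisfy the discrete orthonormality Σ_{i=1}^N w_i Y_{k,j}(x_i) Y_{κ,ι}(x_i) = δ_{kκ} δ_{jι} for points x_1,…,x_N ∈ S² and weights w_1,…,w_N > 0. Let 0 < β_0 ≤ β_1 ≤ … ≤ β_M, let α > 0, let h : [0, ∞) → [0, 1], and let φ : [0, ∞) → [0, ∞) be nondecreasing with φ(0) = 0 and φ(u) > 0 for u > 0. Suppose the Nikolskii-type inequality holds: there is C > 0 such that ‖Σ_{k=0}^M Σ_{j=1}^{2k+1} c_{k,j} Y_{k,j}‖_{C(S²)} ≤ C M (Σ_{k,j} c_{k,j}²)^{1/2} for all real coefficients c_{k,j}. For y ∈ C(S²)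 define V_M y = Σ_{k=0}^M h(k/M) Σ_{j=1}^{2k+1} ⟨Y_{k,j}, y⟩_{L²(S²)} Y_{k,j}, and define T_α g = Σ_{k=0}^M Σ_{j=1}^{2k+1} (1+αβ_k²)^{-1} (Σ_{i=1}^N w_i Y_{k,j}(x_i) g(x_i)) Y_{k,j}, with T_0 the case α = 0. Then ‖(T_0 − T_α) V_M y‖_{C(S²)} ≤ C M · (sup_{u ∈ [0, β_0^{-2}]} α φ(u)/(α+u)) · (Σ_{k=0}^M Σ_{j=1}^{2k+1} ⟨Y_{k,j}, y⟩²_{L²(S²)} / φ(β_k^{-2})²)^{1/2}. -/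
open scoped BigOperators
open MeasureTheory

noncomputable section

set_option maxHeartbeats 1000000 in
/-- Theorem 4.2 of the paper (in the form established by its proof): the regularization
error `‖(T₀ − T_α) V_M y‖_{C(S²)}` is bounded by
`C M (sup_{u∈[0,β₀⁻²]} αφ(u)/(α+u)) (Σ_{k,j} ⟨Y_{k,j},y⟩²/φ(β_k⁻²)²)^{1/2}`.
Here the surface measure on `S²` is the two-dimensional Hausdorff measure `μH[2]`. -/
theorem regularization_error_bound
    (M N : ℕ) (hM : 1 ≤ M)
    (Y : (k : Fin (M + 1)) → Fin (2 * (k : ℕ) + 1) → C(S2, ℝ))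
    (hL2 : ∀ (k k' : Fin (M + 1)) (j : Fin (2 * (k : ℕ) + 1)) (j' : Fin (2 * (k' : ℕ) + 1)),
      (∫ z : S2, Y k j z * Y k' j' z ∂(μH[2])) =
        if (⟨k, j⟩ : Σ k : Fin (M + 1), Fin (2 * (k : ℕ) + 1)) = ⟨k', j'⟩ then 1 else 0)
    (x : Fin N → S2) (w : Fin N → ℝ) (hw : ∀ i, 0 < w i)
    (hdisc : ∀ (k k' : Fin (M + 1)) (j : Fin (2 * (k : ℕ) + 1)) (j' : Fin (2 * (k' : ℕ) + 1)),
      (∑ i, w i * Y k j (x i) * Y k' j' (x i)) =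
        if (⟨k, j⟩ : Σ k : Fin (M + 1), Fin (2 * (k : ℕ) + 1)) = ⟨k', j'⟩ then 1 else 0)
    (β : Fin (M + 1) → ℝ) (hβ0 : 0 < β 0) (hβmono : Monotone β)
    (α : ℝ) (hα : 0 < α)
    (h : ℝ → ℝ) (hh : ∀ t, 0 ≤ t → h t ∈ Set.Icc (0 : ℝ) 1)
    (φ : ℝ → ℝ) (hφ0 : φ 0 = 0)
    (hφmono : ∀ s t, 0 ≤ s → s ≤ t → φ s ≤ φ t)
    (hφpos : ∀ u, 0 < u → 0 < φ u)
    (C : ℝ) (hC : 0 < C)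
    (hNikolskii : ∀ c : (k : Fin (M + 1)) → Fin (2 * (k : ℕ) + 1) → ℝ,
      ‖∑ k, ∑ j, c k j • Y k j‖ ≤ C * M * Real.sqrt (∑ k, ∑ j, c k j ^ 2))
    (y : C(S2, ℝ))
    (Vy : C(S2, ℝ))
    (hVy : Vy = ∑ k : Fin (M + 1), ∑ j,
      (h (((k : ℕ) : ℝ) / M) * ∫ z : S2, Y k j z * y z ∂(μH[2])) • Y k j)
    (T0Vy TαVy : C(S2, ℝ))
    (hT0Vy : T0Vy = ∑ k, ∑ j, (∑ i, w i * Y k j (x i) * Vy (x i)) • Y k j)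
    (hTαVy : TαVy = ∑ k, ∑ j,
      ((1 + α * β k ^ 2)⁻¹ * ∑ i, w i * Y k j (x i) * Vy (x i)) • Y k j) :
    ‖T0Vy - TαVy‖ ≤
      C * M * (⨆ u : Set.Icc (0 : ℝ) ((β 0 ^ 2)⁻¹), α * φ u / (α + (u : ℝ))) *
        Real.sqrt (∑ k, ∑ j,
          (∫ z : S2, Y k j z * y z ∂(μH[2])) ^ 2 / φ ((β k ^ 2)⁻¹) ^ 2) := by
  classical
  set c : (k : Fin (M + 1)) → Fin (2 * (k : ℕ) + 1) → ℝ :=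
    fun k j => ∫ z : S2, Y k j z * y z ∂(μH[2]) with hc
  set a : (k : Fin (M + 1)) → Fin (2 * (k : ℕ) + 1) → ℝ :=
    fun k j => h (((k : ℕ) : ℝ) / M) * c k j with ha
  set u : Fin (M + 1) → ℝ := fun k => (β k ^ 2)⁻¹ with hu
  set S : ℝ := ⨆ v : Set.Icc (0 : ℝ) ((β 0 ^ 2)⁻¹), α * φ v / (α + (v : ℝ)) with hS
  set e : (k : Fin (M + 1)) → Fin (2 * (k : ℕ) + 1) → ℝ :=
    fun k j => (1 - (1 + α * β k ^ 2)⁻¹) * a k j with he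
  -- positivity facts
  have hβk : ∀ k, 0 < β k := fun k => lt_of_lt_of_le hβ0 (hβmono (Fin.zero_le k))
  have huk_pos : ∀ k, 0 < u k := fun k => by
    have := hβk k; simp only [hu]; positivity
  have huk_le : ∀ k, u k ≤ (β 0 ^ 2)⁻¹ := fun k => by
    have h1 : β 0 ^ 2 ≤ β k ^ 2 := by
      have := hβmono (Fin.zero_le k); nlinarith [hβ0]
    have h2 : (0:ℝ) < β 0 ^ 2 := by positivity
    exact inv_anti₀ h2 h1
  have hαu : ∀ k, 0 < α + u k := fun k => by positivity
  -- boundedness of the sup family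
  have hbdd : BddAbove (Set.range fun v : Set.Icc (0 : ℝ) ((β 0 ^ 2)⁻¹) =>
      α * φ v / (α + (v : ℝ))) := by
    refine ⟨φ ((β 0 ^ 2)⁻¹), ?_⟩
    rintro _ ⟨⟨v, hv0, hv1⟩, rfl⟩
    have hφv : 0 ≤ φ v := hφ0 ▸ hφmono 0 v le_rfl hv0
    have hαv : 0 < α + v := by positivity
    have h1 : α * φ v / (α + v) ≤ φ v := by
      rw [div_le_iff₀ hαv]; nlinarith
    exact h1.trans (hφmono v _ hv0 hv1)
  have h0mem : (0:ℝ) ∈ Set.Icc (0:ℝ) ((β 0 ^ 2)⁻¹) := by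
    exact ⟨le_refl 0, by positivity⟩
  have hS_nonneg : 0 ≤ S := by
    have := le_ciSup hbdd (⟨0, h0mem⟩ : Set.Icc (0:ℝ) ((β 0 ^ 2)⁻¹))
    simpa [hφ0] using this
  have hS_ge : ∀ k, α * φ (u k) / (α + u k) ≤ S := fun k =>
    le_ciSup hbdd (⟨u k, (huk_pos k).le, huk_le k⟩ : Set.Icc (0:ℝ) ((β 0 ^ 2)⁻¹))
  -- Step A: discrete inner products of Vy
  have keyA : ∀ (k : Fin (M+1)) (j : Fin (2*(k:ℕ)+1)),
      (∑ i, w i * Y k j (x i) * Vy (x i)) = a k j := by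
    intro k j
    have hVyx : ∀ i, Vy (x i) = ∑ k', ∑ j', a k' j' * Y k' j' (x i) := by
      intro i
      rw [hVy]
      simp [ha, hc]
    calc ∑ i, w i * Y k j (x i) * Vy (x i)
        = ∑ i, ∑ k', ∑ j', a k' j' * (w i * Y k j (x i) * Y k' j' (x i)) := by
          refine Finset.sum_congr rfl fun i _ => ?_
          rw [hVyx i, Finset.mul_sum]
          refine Finset.sum_congr rfl fun k' _ => ?_
          rw [Finset.mul_sum]
          exact Finset.sum_congr rfl fun j' _ => by ring
      _ = ∑ k', ∑ j', a k' j' * ∑ i, w i * Y k j (x i) * Y k' j' (x i) := by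
          rw [Finset.sum_comm]
          refine Finset.sum_congr rfl fun k' _ => ?_
          rw [Finset.sum_comm]
          refine Finset.sum_congr rfl fun j' _ => ?_
          rw [Finset.mul_sum]
      _ = ∑ k', ∑ j', a k' j' *
            (if (⟨k, j⟩ : Σ k : Fin (M+1), Fin (2*(k:ℕ)+1)) = ⟨k', j'⟩ then 1 else 0) := by
          refine Finset.sum_congr rfl fun k' _ => Finset.sum_congr rfl fun j' _ => ?_
          rw [hdisc k k' j j']
      _ = a k j := by
          rw [Finset.sum_sigma']
          simp
  -- Step B: the difference as a single expansion
  have keyB : T0Vy - TαVy = ∑ k, ∑ j, e k j • Y k j := by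
    rw [hT0Vy, hTαVy, ← Finset.sum_sub_distrib]
    refine Finset.sum_congr rfl fun k _ => ?_
    rw [← Finset.sum_sub_distrib]
    refine Finset.sum_congr rfl fun j _ => ?_
    rw [← sub_smul, keyA]
    congr 1
    ring
  -- pointwise bound on coefficients
  have hpt : ∀ (k : Fin (M+1)) (j : Fin (2*(k:ℕ)+1)),
      e k j ^ 2 ≤ S ^ 2 * (c k j ^ 2 / φ (u k) ^ 2) := by
    intro k j
    have hpk : 0 < φ (u k) := hφpos _ (huk_pos k)
    have hcoef : 1 - (1 + α * β k ^ 2)⁻¹ = α / (α + u k) := by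
      have hb2 : (0:ℝ) < β k ^ 2 := pow_pos (hβk k) 2
      have h1 : (0:ℝ) < 1 + α * β k ^ 2 := by positivity
      rw [hu]
      field_simp
      have hbb : β k ^ 2 * (β k)⁻¹ ^ 2 = 1 := by
        rw [← mul_pow, mul_inv_cancel₀ (hβk k).ne', one_pow]
      linear_combination α * hbb
    have hr_nonneg : 0 ≤ α / (α + u k) := by positivity
    have hr_le : α / (α + u k) ≤ S / φ (u k) := by
      rw [le_div_iff₀ hpk]
      calc α / (α + u k) * φ (u k) = α * φ (u k) / (α + u k) := by ring
        _ ≤ S := hS_ge k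
    have hht := hh (((k : ℕ) : ℝ) / M) (by positivity)
    obtain ⟨hht0, hht1⟩ := hht
    have h1 : e k j ^ 2 = (α / (α + u k)) ^ 2 * (h (((k : ℕ) : ℝ) / M)) ^ 2 * c k j ^ 2 := by
      rw [he]
      simp only
      rw [hcoef, ha]
      ring
    have h2 : (α / (α + u k)) ^ 2 ≤ (S / φ (u k)) ^ 2 :=
      pow_le_pow_left₀ hr_nonneg hr_le 2
    have h3 : (h (((k : ℕ) : ℝ) / M)) ^ 2 ≤ 1 := by nlinarith
    calc e k j ^ 2 = (α / (α + u k)) ^ 2 * (h (((k : ℕ) : ℝ) / M)) ^ 2 * c k j ^ 2 := h1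
      _ ≤ (α / (α + u k)) ^ 2 * 1 * c k j ^ 2 :=
          mul_le_mul_of_nonneg_right
            (mul_le_mul_of_nonneg_left h3 (sq_nonneg _)) (sq_nonneg _)
      _ ≤ (S / φ (u k)) ^ 2 * 1 * c k j ^ 2 :=
          mul_le_mul_of_nonneg_right
            (mul_le_mul_of_nonneg_right h2 zero_le_one) (sq_nonneg _)
      _ = S ^ 2 * (c k j ^ 2 / φ (u k) ^ 2) := by
          rw [div_pow]; ring
  -- sum the pointwise bounds
  have hsum : (∑ k, ∑ j, e k j ^ 2) ≤
      S ^ 2 * ∑ k, ∑ j, c k j ^ 2 / φ (u k) ^ 2 := by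
    rw [Finset.mul_sum]
    refine Finset.sum_le_sum fun k _ => ?_
    rw [Finset.mul_sum]
    exact Finset.sum_le_sum fun j _ => hpt k j
  have hsqrt : Real.sqrt (∑ k, ∑ j, e k j ^ 2) ≤
      S * Real.sqrt (∑ k, ∑ j, c k j ^ 2 / φ (u k) ^ 2) := by
    calc Real.sqrt (∑ k, ∑ j, e k j ^ 2)
        ≤ Real.sqrt (S ^ 2 * ∑ k, ∑ j, c k j ^ 2 / φ (u k) ^ 2) := Real.sqrt_le_sqrt hsum
      _ = S * Real.sqrt (∑ k, ∑ j, c k j ^ 2 / φ (u k) ^ 2) := by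
          rw [Real.sqrt_mul (sq_nonneg S), Real.sqrt_sq hS_nonneg]
  calc ‖T0Vy - TαVy‖ ≤ C * M * Real.sqrt (∑ k, ∑ j, e k j ^ 2) := by
        rw [keyB]; exact hNikolskii e
    _ ≤ C * M * (S * Real.sqrt (∑ k, ∑ j, c k j ^ 2 / φ (u k) ^ 2)) := by
        have hCM : (0:ℝ) ≤ C * M := by positivity
        exact mul_le_mul_of_nonneg_left hsqrt hCM
    _ = C * M * S * Real.sqrt (∑ k, ∑ j, c k j ^ 2 / φ (u k) ^ 2) := by ring

end
end

section
/- Under the hypotheses of the abstract Theorem 4.2 setting — continuous Y_{k,j} : S² → ℝ (0 ≤ k ≤ M, 1 ≤ j ≤ 2k+1) orthonormal in L²(S²) and discretely orthonormal with respect to nodes x_i ∈ S² and weights w_i > 0; weights 0 < β_0 ≤ … ≤ β_M; α > 0; filter h : [0,∞) → [0,1]; nondecreasing φ : [0,∞) → [0,∞) with φ(0) = 0 and φ > 0 on (0,∞); a constant C > 0 with ‖Σ_{k,j} c_{k,j} Y_{k,j}‖_{C(S²)} ≤ C M (Σ c²)^{1/2} for all coefficients; V_M y = Σ_{k=0}^M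 h(k/M) Σ_j ⟨Y_{k,j}, y⟩_{L²(S²)} Y_{k,j}; T_α g = Σ_{k,j} (1+αβ_k²)^{-1} (Σ_i w_i Y_{k,j}(x_i) g(x_i)) Y_{k,j} — suppose additionally that y, y^ε ∈ C(S²) satisfy ‖y − y^ε‖_{C(S²)} ≤ δ and ‖y − V_M y‖_{C(S²)} ≤ δ for some δ ≥ 0. Then ‖y − T_α y^ε‖_{C(S²)} ≤ δ + C M (sup_{u∈[0,β_0^{-2}]} α φ(u)/(α+u)) (Σ_{k=0}^M Σ_{j=1}^{2k+1} ⟨Y_{k,j}, y⟩²_{L²(S²)}/φ(β_k^{-2})²)^{1/2} + 2 ‖T_α‖ δ, where ‖T_α‖ denotes the operator norm of T_α as an operator from C(S²) to C(S²). -/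
open scoped BigOperators
open MeasureTheory

noncomputable section

set_option maxHeartbeats 1000000 in
/-- The paper's combined error bound: if `‖y − yᵉ‖ ≤ δ` and `‖y − V_M y‖ ≤ δ`, then
`‖y − T_α yᵉ‖ ≤ δ + C M (sup_{u∈[0,β₀⁻²]} αφ(u)/(α+u)) (Σ_{k,j} ⟨Y_{k,j},y⟩²/φ(β_k⁻²)²)^{1/2}
 + 2‖T_α‖ δ`, where `‖T_α‖` is the operator norm of `T_α : C(S²) → C(S²)`.
Here the surface measure on `S²` is the two-dimensional Hausdorff measure `μH[2]`. -/
theorem combined_error_bound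
    (M N : ℕ) (hM : 1 ≤ M)
    (Y : (k : Fin (M + 1)) → Fin (2 * (k : ℕ) + 1) → C(S2, ℝ))
    (hL2 : ∀ (k k' : Fin (M + 1)) (j : Fin (2 * (k : ℕ) + 1)) (j' : Fin (2 * (k' : ℕ) + 1)),
      (∫ z : S2, Y k j z * Y k' j' z ∂(μH[2])) =
        if (⟨k, j⟩ : Σ k : Fin (M + 1), Fin (2 * (k : ℕ) + 1)) = ⟨k', j'⟩ then 1 else 0)
    (x : Fin N → S2) (w : Fin N → ℝ) (hw : ∀ i, 0 < w i)
    (hdisc : ∀ (k k' : Fin (M + 1)) (j : Fin (2 * (k : ℕ) + 1)) (j' : Fin (2 * (k' : ℕ) + 1)),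
      (∑ i, w i * Y k j (x i) * Y k' j' (x i)) =
        if (⟨k, j⟩ : Σ k : Fin (M + 1), Fin (2 * (k : ℕ) + 1)) = ⟨k', j'⟩ then 1 else 0)
    (β : Fin (M + 1) → ℝ) (hβ0 : 0 < β 0) (hβmono : Monotone β)
    (α : ℝ) (hα : 0 < α)
    (h : ℝ → ℝ) (hh : ∀ t, 0 ≤ t → h t ∈ Set.Icc (0 : ℝ) 1)
    (φ : ℝ → ℝ) (hφ0 : φ 0 = 0)
    (hφmono : ∀ s t, 0 ≤ s → s ≤ t → φ s ≤ φ t)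
    (hφpos : ∀ u, 0 < u → 0 < φ u)
    (C : ℝ) (hC : 0 < C)
    (hNikolskii : ∀ c : (k : Fin (M + 1)) → Fin (2 * (k : ℕ) + 1) → ℝ,
      ‖∑ k, ∑ j, c k j • Y k j‖ ≤ C * M * Real.sqrt (∑ k, ∑ j, c k j ^ 2))
    (y yε : C(S2, ℝ))
    (Vy : C(S2, ℝ))
    (hVy : Vy = ∑ k : Fin (M + 1), ∑ j,
      (h (((k : ℕ) : ℝ) / M) * ∫ z : S2, Y k j z * y z ∂(μH[2])) • Y k j)
    (T : C(S2, ℝ) →L[ℝ] C(S2, ℝ))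
    (hT : ∀ g : C(S2, ℝ), T g = ∑ k, ∑ j,
      ((1 + α * β k ^ 2)⁻¹ * ∑ i, w i * Y k j (x i) * g (x i)) • Y k j)
    (δ : ℝ) (hδ : 0 ≤ δ)
    (hnoise : ‖y - yε‖ ≤ δ)
    (happrox : ‖y - Vy‖ ≤ δ) :
    ‖y - T yε‖ ≤
      δ + C * M * (⨆ u : Set.Icc (0 : ℝ) ((β 0 ^ 2)⁻¹), α * φ u / (α + (u : ℝ))) *
          Real.sqrt (∑ k, ∑ j,
            (∫ z : S2, Y k j z * y z ∂(μH[2])) ^ 2 / φ ((β k ^ 2)⁻¹) ^ 2)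
        + 2 * ‖T‖ * δ := by
  -- abbreviations
  set c : (k : Fin (M + 1)) → Fin (2 * (k : ℕ) + 1) → ℝ :=
    fun k j => ∫ z : S2, Y k j z * y z ∂(μH[2]) with hc
  set S : ℝ := ⨆ u : Set.Icc (0 : ℝ) ((β 0 ^ 2)⁻¹), α * φ u / (α + (u : ℝ)) with hSdef
  set a : (k : Fin (M + 1)) → Fin (2 * (k : ℕ) + 1) → ℝ :=
    fun k j => h (((k : ℕ) : ℝ) / M) * c k j with ha
  set b : Fin (M + 1) → ℝ := fun k => (1 + α * β k ^ 2)⁻¹ with hb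
  set d : (k : Fin (M + 1)) → Fin (2 * (k : ℕ) + 1) → ℝ :=
    fun k j => (1 - b k) * a k j with hd
  have hβpos : ∀ k : Fin (M + 1), 0 < β k := fun k => lt_of_lt_of_le hβ0 (hβmono (Fin.zero_le k))
  have hβsq : ∀ k : Fin (M + 1), 0 < β k ^ 2 := fun k => pow_pos (hβpos k) 2
  have hu0 : (0 : ℝ) < (β 0 ^ 2)⁻¹ := inv_pos.2 (hβsq 0)
  have hmemk : ∀ k : Fin (M + 1), ((β k ^ 2)⁻¹) ∈ Set.Icc (0 : ℝ) ((β 0 ^ 2)⁻¹) := by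
    intro k
    refine ⟨le_of_lt (inv_pos.2 (hβsq k)), ?_⟩
    have h1 : β 0 ^ 2 ≤ β k ^ 2 := by
      have := hβmono (Fin.zero_le k)
      nlinarith [hβ0]
    exact inv_anti₀ (hβsq 0) h1
  haveI hne : Nonempty (Set.Icc (0 : ℝ) ((β 0 ^ 2)⁻¹)) := ⟨⟨0, Set.left_mem_Icc.2 hu0.le⟩⟩
  have hφnonneg : ∀ u : ℝ, 0 ≤ u → 0 ≤ φ u := fun u hu => hφ0 ▸ hφmono 0 u le_rfl hu
  have hbdd : BddAbove (Set.range fun u : Set.Icc (0 : ℝ) ((β 0 ^ 2)⁻¹) =>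
      α * φ u / (α + (u : ℝ))) := by
    refine ⟨φ ((β 0 ^ 2)⁻¹), ?_⟩
    rintro _ ⟨⟨u, hu⟩, rfl⟩
    have h1 : 0 < α + u := by linarith [hu.1, hα]
    rw [div_le_iff₀ h1]
    have h2 : φ u ≤ φ ((β 0 ^ 2)⁻¹) := hφmono u _ hu.1 hu.2
    have h3 : 0 ≤ φ ((β 0 ^ 2)⁻¹) := hφnonneg _ hu0.le
    nlinarith [hu.1]
  have hS0 : 0 ≤ S := by
    have := le_ciSup hbdd (⟨0, Set.left_mem_Icc.2 hu0.le⟩ : Set.Icc (0 : ℝ) ((β 0 ^ 2)⁻¹))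
    simpa [hφ0] using this
  have hSle : ∀ k : Fin (M + 1),
      α * φ ((β k ^ 2)⁻¹) / (α + (β k ^ 2)⁻¹) ≤ S :=
    fun k => le_ciSup hbdd (⟨(β k ^ 2)⁻¹, hmemk k⟩ : Set.Icc (0 : ℝ) ((β 0 ^ 2)⁻¹))
  -- V_M y in terms of `a`
  have hVy' : Vy = ∑ k, ∑ j, a k j • Y k j := hVy
  -- evaluation of V_M y at the nodes
  have hVx : ∀ z : S2, Vy z = ∑ k', ∑ j', a k' j' * Y k' j' z := by
    intro z
    rw [hVy']
    simp [ContinuousMap.coe_sum, Finset.sum_apply, smul_eq_mul]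
  -- the discrete inner products of V_M y reproduce the coefficients
  have key : ∀ (k : Fin (M + 1)) (j : Fin (2 * (k : ℕ) + 1)),
      (∑ i, w i * Y k j (x i) * Vy (x i)) = a k j := by
    intro k j
    have step1 : (∑ i, w i * Y k j (x i) * Vy (x i)) =
        ∑ k', ∑ j', a k' j' * ∑ i, w i * Y k j (x i) * Y k' j' (x i) := by
      simp_rw [hVx, Finset.mul_sum]
      rw [Finset.sum_comm]
      refine Finset.sum_congr rfl fun k' _ => ?_
      rw [Finset.sum_comm]
      refine Finset.sum_congr rfl fun j' _ => ?_
      exact Finset.sum_congr rfl fun i _ => by ring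
    rw [step1]
    simp_rw [hdisc, mul_ite, mul_one, mul_zero]
    calc (∑ k', ∑ j',
          if (⟨k, j⟩ : Σ k : Fin (M + 1), Fin (2 * (k : ℕ) + 1)) = ⟨k', j'⟩
            then a k' j' else 0)
        = ∑ p ∈ Finset.univ.sigma (fun _ => Finset.univ),
            (if (⟨k, j⟩ : Σ k : Fin (M + 1), Fin (2 * (k : ℕ) + 1)) = p
              then a p.1 p.2 else 0) :=
            (Finset.sum_sigma Finset.univ (fun _ => Finset.univ)
              (fun p : Σ k : Fin (M + 1), Fin (2 * (k : ℕ) + 1) =>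
                if (⟨k, j⟩ : Σ k : Fin (M + 1), Fin (2 * (k : ℕ) + 1)) = p
                  then a p.1 p.2 else 0)).symm
      _ = a k j := by
          rw [Finset.sum_ite_eq]
          simp [Finset.mem_sigma]
  -- T applied to V_M y
  have hTVy : T Vy = ∑ k, ∑ j, (b k * a k j) • Y k j := by
    rw [hT Vy]
    refine Finset.sum_congr rfl fun k _ => Finset.sum_congr rfl fun j _ => ?_
    rw [key k j]
  -- the middle term as a single expansion
  have hmidexp : Vy - T Vy = ∑ k, ∑ j, d k j • Y k j := by
    rw [hTVy, hVy', ← Finset.sum_sub_distrib]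
    refine Finset.sum_congr rfl fun k _ => ?_
    rw [← Finset.sum_sub_distrib]
    refine Finset.sum_congr rfl fun j _ => ?_
    rw [← sub_smul]
    congr 1
    simp only [hd]
    ring
  -- termwise coefficient bound
  have hterm : ∀ (k : Fin (M + 1)) (j : Fin (2 * (k : ℕ) + 1)),
      d k j ^ 2 ≤ S ^ 2 * (c k j ^ 2 / φ ((β k ^ 2)⁻¹) ^ 2) := by
    intro k j
    set u : ℝ := (β k ^ 2)⁻¹ with hudef
    have hupos : 0 < u := inv_pos.2 (hβsq k)
    have hφu : 0 < φ u := hφpos u hupos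
    have hαu : 0 < α + u := by linarith
    have hfrac : 1 - b k = α / (α + u) := by
      simp only [hb, hudef]
      have h1 : (0 : ℝ) < β k ^ 2 := hβsq k
      have h2 : (0 : ℝ) < 1 + α * β k ^ 2 := by nlinarith
      field_simp
      rw [add_sub_cancel_left, mul_add, mul_one_div, mul_div_assoc, div_self h1.ne']
      ring
    have hhk : h (((k : ℕ) : ℝ) / M) ∈ Set.Icc (0 : ℝ) 1 := by
      refine hh _ ?_
      positivity
    have habs : |d k j| ≤ S * (|c k j| / φ u) := by
      have h1 : |d k j| = (α / (α + u)) * |h (((k : ℕ) : ℝ) / M)| * |c k j| := by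
        simp only [hd, ha, hfrac, abs_mul]
        rw [abs_of_pos (div_pos hα hαu)]
        ring
      have h2 : (α / (α + u)) * |h (((k : ℕ) : ℝ) / M)| * |c k j| ≤
          (α / (α + u)) * |c k j| := by
        have h3 : |h (((k : ℕ) : ℝ) / M)| ≤ 1 := by
          rw [abs_of_nonneg hhk.1]; exact hhk.2
        exact mul_le_mul_of_nonneg_right
          (mul_le_of_le_one_right (le_of_lt (div_pos hα hαu)) h3) (abs_nonneg _)
      have h4 : (α / (α + u)) * |c k j| = (α * φ u / (α + u)) * (|c k j| / φ u) := by
        field_simp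
      have h5 : (α * φ u / (α + u)) * (|c k j| / φ u) ≤ S * (|c k j| / φ u) := by
        refine mul_le_mul_of_nonneg_right (hSle k) ?_
        positivity
      linarith [h1 ▸ h2, h4 ▸ h5, h4, h1]
    calc d k j ^ 2 = |d k j| ^ 2 := (sq_abs _).symm
      _ ≤ (S * (|c k j| / φ u)) ^ 2 := by
          apply pow_le_pow_left₀ (abs_nonneg _) habs
      _ = S ^ 2 * (c k j ^ 2 / φ u ^ 2) := by
          rw [mul_pow, div_pow, sq_abs]
  -- sum bound
  have hsum : (∑ k, ∑ j, d k j ^ 2) ≤ S ^ 2 * ∑ k, ∑ j, c k j ^ 2 / φ ((β k ^ 2)⁻¹) ^ 2 := by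
    rw [Finset.mul_sum]
    refine Finset.sum_le_sum fun k _ => ?_
    rw [Finset.mul_sum]
    exact Finset.sum_le_sum fun j _ => hterm k j
  -- middle term norm bound
  have hmid : ‖Vy - T Vy‖ ≤
      C * M * S * Real.sqrt (∑ k, ∑ j, c k j ^ 2 / φ ((β k ^ 2)⁻¹) ^ 2) := by
    rw [hmidexp]
    refine le_trans (hNikolskii d) ?_
    rw [mul_assoc (C * (M : ℝ))]
    refine mul_le_mul_of_nonneg_left ?_ (by positivity)
    calc Real.sqrt (∑ k, ∑ j, d k j ^ 2) ≤
        Real.sqrt (S ^ 2 * ∑ k, ∑ j, c k j ^ 2 / φ ((β k ^ 2)⁻¹) ^ 2) :=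
          Real.sqrt_le_sqrt hsum
      _ = S * Real.sqrt (∑ k, ∑ j, c k j ^ 2 / φ ((β k ^ 2)⁻¹) ^ 2) := by
          rw [Real.sqrt_mul (sq_nonneg S), Real.sqrt_sq hS0]
  -- decomposition
  have hdecomp : y - T yε = (y - Vy) + (Vy - T Vy) + T (Vy - y) + T (y - yε) := by
    rw [map_sub, map_sub]
    abel
  have hT1 : ‖T (Vy - y)‖ ≤ ‖T‖ * δ := by
    refine le_trans (T.le_opNorm _) ?_
    refine mul_le_mul_of_nonneg_left ?_ (norm_nonneg T)
    rw [norm_sub_rev]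
    exact happrox
  have hT2 : ‖T (y - yε)‖ ≤ ‖T‖ * δ :=
    le_trans (T.le_opNorm _) (mul_le_mul_of_nonneg_left hnoise (norm_nonneg T))
  calc ‖y - T yε‖ = ‖(y - Vy) + (Vy - T Vy) + T (Vy - y) + T (y - yε)‖ := by rw [← hdecomp]
    _ ≤ ‖(y - Vy) + (Vy - T Vy) + T (Vy - y)‖ + ‖T (y - yε)‖ := norm_add_le _ _
    _ ≤ ‖(y - Vy) + (Vy - T Vy)‖ + ‖T (Vy - y)‖ + ‖T (y - yε)‖ := by
        gcongr; exact norm_add_le _ _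
    _ ≤ ‖y - Vy‖ + ‖Vy - T Vy‖ + ‖T (Vy - y)‖ + ‖T (y - yε)‖ := by
        gcongr; exact norm_add_le _ _
    _ ≤ δ + C * M * S * Real.sqrt (∑ k, ∑ j, c k j ^ 2 / φ ((β k ^ 2)⁻¹) ^ 2)
          + ‖T‖ * δ + ‖T‖ * δ := by
        exact add_le_add (add_le_add (add_le_add happrox hmid) hT1) hT2
    _ = δ + C * M * S * Real.sqrt (∑ k, ∑ j, c k j ^ 2 / φ ((β k ^ 2)⁻¹) ^ 2)
          + 2 * ‖T‖ * δ := by ring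

end
end
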